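/- (Error threshold for finitely many peaks.) Fix an integer k ≥ 1 and values σ_1,…,σ_k > 1, and set σ = max_i σ_i. Let a ∈ [0, ln σ) ∪ (ln σ, ∞) with a < ∞, and let (ℓ_m), (q_m) be sequences with ℓ_m → ∞, q_m → 0, ℓ_m q_m → a. For each m, choose k distinct peaks w*_1,…,w*_k in 𝒜^{ℓ_m} and let λ_m be the mean fitness of a quasispecies solution for the fitness function f(w*_i) = σ_i (1 ≤ i ≤ k) and f(u) = 1 otherwise. Then: if a > ln σ, λ_m → 1; if a < ln σ, λ_m → σ e^{−a} > 1. -/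

import Mathlib

open scoped BigOperators
open Filter Topology

set_option maxHeartbeats 1000000

/-- Error threshold for finitely many peaks: with `σ = max_i σ_i`, in the long
chain regime `ℓ_m → ∞`, `q_m → 0`, `ℓ_m q_m → a < ∞`, the mean fitness `λ_m`
converges to `1` if `a > ln σ` and to `σ e^{-a} > 1` if `a < ln σ`. -/
theorem error_threshold_finitely_many_peaks
    (A : Type*) [Fintype A] [DecidableEq A] (κ : ℕ)
    (hκ : Fintype.card A = κ) (hκ2 : 2 ≤ κ)
    (k : ℕ) (hk : 1 ≤ k)
    (σi : Fin k → ℝ) (hσi : ∀ i, 1 < σi i)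
    (σ : ℝ) (hσub : ∀ i, σi i ≤ σ) (hσmem : ∃ i, σi i = σ)
    (a : ℝ) (ha0 : 0 ≤ a) (hane : a ≠ Real.log σ)
    (ℓ : ℕ → ℕ) (q : ℕ → ℝ)
    (hℓ : Tendsto ℓ atTop atTop)
    (hq0 : ∀ m, 0 < q m) (hq1 : ∀ m, q m < ((κ : ℝ) - 1) / κ)
    (hq : Tendsto q atTop (𝓝 0))
    (hlq : Tendsto (fun m => (ℓ m : ℝ) * q m) atTop (𝓝 a))
    (w : ∀ m, Fin k → (Fin (ℓ m) → A))
    (hw : ∀ m, Function.Injective (w m))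
    (f : ∀ m, (Fin (ℓ m) → A) → ℝ)
    (hfpeak : ∀ m i, f m (w m i) = σi i)
    (hfother : ∀ m u, (∀ i, u ≠ w m i) → f m u = 1)
    (x : ∀ m, (Fin (ℓ m) → A) → ℝ)
    (hx0 : ∀ m u, 0 ≤ x m u) (hx1 : ∀ m, ∑ u, x m u = 1)
    (hqs : ∀ m u, x m u * (∑ v, x m v * f m v) =
      ∑ v, x m v * f m v *
        ((q m / ((κ : ℝ) - 1)) ^ hammingDist v u *
          (1 - q m) ^ (ℓ m - hammingDist v u))) :
    (Real.log σ < a →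
      Tendsto (fun m => ∑ v, x m v * f m v) atTop (𝓝 1)) ∧
    (a < Real.log σ →
      1 < σ * Real.exp (-a) ∧
        Tendsto (fun m => ∑ v, x m v * f m v) atTop (𝓝 (σ * Real.exp (-a)))) := by
  -- basic positivity facts
  have hκR : (2:ℝ) ≤ (κ:ℝ) := by exact_mod_cast hκ2
  have hκ1 : (0:ℝ) < (κ:ℝ) - 1 := by linarith
  have hq1' : ∀ m, q m < 1 := by
    intro m
    have h := hq1 m
    have : ((κ:ℝ) - 1) / κ < 1 := by
      rw [div_lt_one (by linarith : (0:ℝ) < (κ:ℝ))]; linarith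
    linarith
  have hs0 : ∀ m, 0 < 1 - q m := fun m => by linarith [hq1' m]
  have hr0 : ∀ m, 0 < q m / ((κ:ℝ) - 1) := fun m => div_pos (hq0 m) hκ1
  have hqκ : ∀ m, q m * κ < (κ:ℝ) - 1 := by
    intro m
    have h := hq1 m
    rwa [lt_div_iff₀ (by linarith : (0:ℝ) < (κ:ℝ))] at h
  have hrs : ∀ m, q m / ((κ:ℝ) - 1) ≤ 1 - q m := by
    intro m
    rw [div_le_iff₀ hκ1]
    nlinarith [hqκ m, hq0 m]
  have hrq : ∀ m, q m / ((κ:ℝ) - 1) ≤ q m := by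
    intro m
    rw [div_le_iff₀ hκ1]
    nlinarith [ (hq0 m).le ]
  have hσ1 : 1 < σ := by obtain ⟨i, hi⟩ := hσmem; rw [← hi]; exact hσi i
  have hσ0 : (0:ℝ) < σ := by linarith
  have hf1 : ∀ m v, 1 ≤ f m v := by
    intro m v
    by_cases h : ∃ i, v = w m i
    · obtain ⟨i, rfl⟩ := h; rw [hfpeak m i]; exact (hσi i).le
    · push_neg at h; rw [hfother m v h]
  have hfσ : ∀ m v, f m v ≤ σ := by
    intro m v
    by_cases h : ∃ i, v = w m i
    · obtain ⟨i, rfl⟩ := h; rw [hfpeak m i]; exact hσub i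
    · push_neg at h; rw [hfother m v h]; linarith
  have hxf : ∀ m v, (0:ℝ) ≤ x m v * f m v := fun m v =>
    mul_nonneg (hx0 m v) (by linarith [hf1 m v])
  have hL1 : ∀ m, 1 ≤ ∑ v, x m v * f m v := by
    intro m
    calc (1:ℝ) = ∑ v, x m v := (hx1 m).symm
    _ ≤ ∑ v, x m v * f m v := by
        apply Finset.sum_le_sum
        intro v _
        nlinarith [hx0 m v, hf1 m v]
  have hLσ : ∀ m, ∑ v, x m v * f m v ≤ σ := by
    intro m
    calc ∑ v, x m v * f m v ≤ ∑ v, x m v * σ := by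
          apply Finset.sum_le_sum
          intro v _
          exact mul_le_mul_of_nonneg_left (hfσ m v) (hx0 m v)
    _ = σ := by rw [← Finset.sum_mul, hx1 m, one_mul]
  -- positivity of all coordinates
  have hxpos : ∀ m u, 0 < x m u := by
    intro m u
    rcases (hx0 m u).lt_or_eq with h | h
    · exact h
    · exfalso
      have h0 : (0:ℝ) = ∑ v, x m v * f m v *
          ((q m / ((κ : ℝ) - 1)) ^ hammingDist v u *
            (1 - q m) ^ (ℓ m - hammingDist v u)) := by
        have := hqs m u; rw [← h] at this; simpa using this
      have h0' := h0.symm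
      have hall : ∀ v ∈ Finset.univ, x m v * f m v *
          ((q m / ((κ : ℝ) - 1)) ^ hammingDist v u *
            (1 - q m) ^ (ℓ m - hammingDist v u)) = 0 := by
        rw [Finset.sum_eq_zero_iff_of_nonneg] at h0'
        · exact h0'
        · intro v _
          exact mul_nonneg (hxf m v)
            (mul_nonneg (pow_pos (hr0 m) _).le (pow_pos (hs0 m) _).le)
      have hx00 : ∀ v, x m v = 0 := by
        intro v
        have hv := hall v (Finset.mem_univ v)
        have hM : (0:ℝ) < (q m / ((κ : ℝ) - 1)) ^ hammingDist v u *
            (1 - q m) ^ (ℓ m - hammingDist v u) :=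
          mul_pos (pow_pos (hr0 m) _) (pow_pos (hs0 m) _)
        have hfv : (0:ℝ) < f m v := by linarith [hf1 m v]
        rcases mul_eq_zero.mp hv with h' | h'
        · rcases mul_eq_zero.mp h' with h'' | h''
          · exact h''
          · exact absurd h'' hfv.ne'
        · exact absurd h' hM.ne'
      have := hx1 m
      rw [Finset.sum_eq_zero (fun v _ => hx00 v)] at this
      norm_num at this
  -- mutation kernel bounds
  have hMle : ∀ m (v u : Fin (ℓ m) → A), v ≠ u →
      (q m / ((κ : ℝ) - 1)) ^ hammingDist v u *
        (1 - q m) ^ (ℓ m - hammingDist v u) ≤ q m := by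
    intro m v u hvu
    set r := q m / ((κ:ℝ) - 1) with hrdef
    set s := 1 - q m with hsdef
    have hd1 : 1 ≤ hammingDist v u := hammingDist_pos.mpr hvu
    have hdl : hammingDist v u ≤ ℓ m := by
      have := hammingDist_le_card_fintype (x := v) (y := u)
      simpa using this
    set d := hammingDist v u
    have h1 : r ^ d ≤ r * s ^ (d - 1) := by
      have hdd : r ^ d = r ^ 1 * r ^ (d - 1) := by
        rw [← pow_add]; congr 1; omega
      rw [hdd, pow_one]
      exact mul_le_mul_of_nonneg_left (pow_le_pow_left₀ (hr0 m).le (hrs m) _) (hr0 m).le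
    have h2 : r ^ d * s ^ (ℓ m - d) ≤ r * s ^ (ℓ m - 1) := by
      calc r ^ d * s ^ (ℓ m - d) ≤ (r * s ^ (d-1)) * s ^ (ℓ m - d) :=
            mul_le_mul_of_nonneg_right h1 (pow_nonneg (hs0 m).le _)
      _ = r * s ^ (ℓ m - 1) := by
            rw [mul_assoc, ← pow_add]
            congr 2
            omega
    have h3 : r * s ^ (ℓ m - 1) ≤ r * 1 := by
      apply mul_le_mul_of_nonneg_left _ (hr0 m).le
      exact pow_le_one₀ (hs0 m).le (by rw [hsdef]; linarith [hq0 m])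
    calc r ^ d * s ^ (ℓ m - d) ≤ r * 1 := le_trans h2 h3
    _ = r := mul_one r
    _ ≤ q m := hrq m
  -- lower bound: σ (1-q)^ℓ ≤ λ
  have hLB : ∀ m, σ * (1 - q m) ^ ℓ m ≤ ∑ v, x m v * f m v := by
    intro m
    obtain ⟨i, hi⟩ := hσmem
    have hqs' := hqs m (w m i)
    have hsingle : x m (w m i) * f m (w m i) *
        ((q m / ((κ : ℝ) - 1)) ^ hammingDist (w m i) (w m i) *
          (1 - q m) ^ (ℓ m - hammingDist (w m i) (w m i))) ≤
        ∑ v, x m v * f m v *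
          ((q m / ((κ : ℝ) - 1)) ^ hammingDist v (w m i) *
            (1 - q m) ^ (ℓ m - hammingDist v (w m i))) := by
      exact Finset.single_le_sum
        (f := fun v => x m v * f m v *
          ((q m / ((κ : ℝ) - 1)) ^ hammingDist v (w m i) *
            (1 - q m) ^ (ℓ m - hammingDist v (w m i))))
        (fun v _ => mul_nonneg (hxf m v)
          (mul_nonneg (pow_pos (hr0 m) _).le (pow_pos (hs0 m) _).le))
        (Finset.mem_univ (w m i))
    rw [hammingDist_self, pow_zero, one_mul, Nat.sub_zero, hfpeak m i, hi] at hsingle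
    rw [← hqs'] at hsingle
    have hx := hxpos m (w m i)
    have : x m (w m i) * (σ * (1 - q m) ^ ℓ m) ≤
        x m (w m i) * (∑ v, x m v * f m v) := by
      calc x m (w m i) * (σ * (1 - q m) ^ ℓ m) = x m (w m i) * σ * (1 - q m) ^ ℓ m := by ring
      _ ≤ _ := hsingle
    exact le_of_mul_le_mul_left this hx
  -- key inequality: x(w_i) (λ - σ_i (1-q)^ℓ) ≤ q σ
  have hKI : ∀ m i, x m (w m i) * ((∑ v, x m v * f m v) - σi i * (1 - q m) ^ ℓ m)
      ≤ q m * σ := by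
    intro m i
    have hqs' := hqs m (w m i)
    have hsplit : ∑ v, x m v * f m v *
        ((q m / ((κ : ℝ) - 1)) ^ hammingDist v (w m i) *
          (1 - q m) ^ (ℓ m - hammingDist v (w m i)))
        = x m (w m i) * f m (w m i) *
            ((q m / ((κ : ℝ) - 1)) ^ hammingDist (w m i) (w m i) *
              (1 - q m) ^ (ℓ m - hammingDist (w m i) (w m i)))
          + ∑ v ∈ Finset.univ.erase (w m i), x m v * f m v *
            ((q m / ((κ : ℝ) - 1)) ^ hammingDist v (w m i) *
              (1 - q m) ^ (ℓ m - hammingDist v (w m i))) :=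
      (Finset.add_sum_erase _ _ (Finset.mem_univ (w m i))).symm
    have herase : ∑ v ∈ Finset.univ.erase (w m i), x m v * f m v *
        ((q m / ((κ : ℝ) - 1)) ^ hammingDist v (w m i) *
          (1 - q m) ^ (ℓ m - hammingDist v (w m i)))
        ≤ q m * σ := by
      calc ∑ v ∈ Finset.univ.erase (w m i), x m v * f m v *
          ((q m / ((κ : ℝ) - 1)) ^ hammingDist v (w m i) *
            (1 - q m) ^ (ℓ m - hammingDist v (w m i)))
          ≤ ∑ v ∈ Finset.univ.erase (w m i), x m v * f m v * q m := by
            apply Finset.sum_le_sum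
            intro v hv
            have hvne : v ≠ w m i := (Finset.mem_erase.mp hv).1
            exact mul_le_mul_of_nonneg_left (hMle m v (w m i) hvne) (hxf m v)
      _ ≤ ∑ v, x m v * f m v * q m := by
            apply Finset.sum_le_sum_of_subset_of_nonneg (Finset.erase_subset _ _)
            intro v _ _
            exact mul_nonneg (hxf m v) (hq0 m).le
      _ = (∑ v, x m v * f m v) * q m := by rw [Finset.sum_mul]
      _ ≤ σ * q m := mul_le_mul_of_nonneg_right (hLσ m) (hq0 m).le
      _ = q m * σ := mul_comm _ _
    rw [hsplit, hammingDist_self, pow_zero, one_mul, Nat.sub_zero, hfpeak m i] at hqs'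
    nlinarith [hqs', herase]
  -- expansion of λ
  have hLe : ∀ m, ∑ v, x m v * f m v = 1 + ∑ i, (σi i - 1) * x m (w m i) := by
    intro m
    have h1 : ∑ v, x m v * f m v = ∑ v, x m v + ∑ v, x m v * (f m v - 1) := by
      rw [← Finset.sum_add_distrib]
      apply Finset.sum_congr rfl
      intro v _
      ring
    have h2 : ∑ v, x m v * (f m v - 1)
        = ∑ v ∈ Finset.univ.image (w m), x m v * (f m v - 1) := by
      symm
      apply Finset.sum_subset (Finset.subset_univ _)
      intro v _ hv
      have : ∀ i, v ≠ w m i := by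
        intro i hvi
        exact hv (Finset.mem_image.mpr ⟨i, Finset.mem_univ i, hvi.symm⟩)
      rw [hfother m v this]
      ring
    have h3 : ∑ v ∈ Finset.univ.image (w m), x m v * (f m v - 1)
        = ∑ i, x m (w m i) * (f m (w m i) - 1) :=
      Finset.sum_image (fun i _ j _ hij => hw m hij)
    rw [h1, h2, h3, hx1 m]
    congr 1
    apply Finset.sum_congr rfl
    intro i _
    rw [hfpeak m i]
    ring
  -- the limit (1-q)^ℓ → exp(-a)
  have hP : Tendsto (fun m => (1 - q m) ^ ℓ m) atTop (𝓝 (Real.exp (-a))) := by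
    have hderiv : HasDerivAt (fun t : ℝ => Real.log (1 - t)) (-1) 0 := by
      have h1 : HasDerivAt (fun t : ℝ => 1 - t) (-1) 0 := by
        simpa using (hasDerivAt_id (0:ℝ)).const_sub 1
      have h2 := (Real.hasDerivAt_log (by norm_num : (1:ℝ) - 0 ≠ 0)).comp 0 h1
      exact h2.congr_deriv (by norm_num)
    have hslope := hasDerivAt_iff_tendsto_slope.mp hderiv
    have hqne : Tendsto q atTop (𝓝[≠] 0) :=
      tendsto_nhdsWithin_of_tendsto_nhds_of_eventually_within q hq
        (Filter.Eventually.of_forall fun m => (hq0 m).ne')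
    have hcomp : Tendsto (fun m => slope (fun t : ℝ => Real.log (1 - t)) 0 (q m))
        atTop (𝓝 (-1)) := hslope.comp hqne
    have hmain : Tendsto (fun m => (ℓ m : ℝ) * Real.log (1 - q m)) atTop (𝓝 (-a)) := by
      have := hlq.mul hcomp
      rw [show a * (-1) = -a by ring] at this
      apply this.congr
      intro m
      have hqm : q m ≠ 0 := (hq0 m).ne'
      simp only [slope_def_field, div_sub_div_same]
      field_simp
      simp [Real.log_one]
      ring
    have := (Real.continuous_exp.tendsto _).comp hmain
    apply this.congr
    intro m
    simp only [Function.comp_apply]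
    rw [← Real.log_pow, Real.exp_log (pow_pos (hs0 m) _)]
  have hσP : Tendsto (fun m => σ * (1 - q m) ^ ℓ m) atTop (𝓝 (σ * Real.exp (-a))) :=
    hP.const_mul σ
  have hexpmul : Real.exp (-a) * Real.exp a = 1 := by
    rw [← Real.exp_add]; norm_num
  constructor
  · -- supercritical case: λ → 1
    intro hgt
    have hexp : σ < Real.exp a := (Real.log_lt_iff_lt_exp hσ0).mp hgt
    have hc : σ * Real.exp (-a) < 1 := by nlinarith [Real.exp_pos (-a)]
    set c : ℝ := (1 + σ * Real.exp (-a)) / 2 with hcdef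
    have hc1 : c < 1 := by
      rw [hcdef]
      nlinarith [mul_pos hσ0 (Real.exp_pos (-a))]
    have hcgt : σ * Real.exp (-a) < c := by
      rw [hcdef]; nlinarith
    have hev : ∀ᶠ m in atTop, σ * (1 - q m) ^ ℓ m < c :=
      hσP.eventually (eventually_lt_nhds hcgt)
    have hub : ∀ᶠ m in atTop,
        ∑ v, x m v * f m v ≤ 1 + (k * σ * σ / (1 - c)) * q m := by
      filter_upwards [hev] with m hm
      have hxi : ∀ i, x m (w m i) ≤ q m * σ / (1 - c) := by
        intro i
        have hK := hKI m i
        have hpow : (0:ℝ) ≤ (1 - q m) ^ ℓ m := (pow_pos (hs0 m) _).le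
        have hσiP : σi i * (1 - q m) ^ ℓ m ≤ σ * (1 - q m) ^ ℓ m :=
          mul_le_mul_of_nonneg_right (hσub i) hpow
        have hgap : 1 - c ≤ (∑ v, x m v * f m v) - σi i * (1 - q m) ^ ℓ m := by
          have := hL1 m
          linarith
        have hx := hx0 m (w m i)
        rw [le_div_iff₀ (by linarith : (0:ℝ) < 1 - c)]
        nlinarith
      calc ∑ v, x m v * f m v = 1 + ∑ i, (σi i - 1) * x m (w m i) := hLe m
      _ ≤ 1 + ∑ i : Fin k, σ * (q m * σ / (1 - c)) := by
          apply add_le_add le_rfl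
          apply Finset.sum_le_sum
          intro i _
          have h1 : σi i - 1 ≤ σ := by linarith [hσub i]
          have h2 : 0 ≤ x m (w m i) := hx0 m (w m i)
          have h3 := hxi i
          have h4 : (0:ℝ) ≤ σi i - 1 := by linarith [hσi i]
          calc (σi i - 1) * x m (w m i) ≤ σ * x m (w m i) :=
                mul_le_mul_of_nonneg_right h1 h2
          _ ≤ σ * (q m * σ / (1 - c)) := mul_le_mul_of_nonneg_left h3 hσ0.le
      _ = 1 + (k * σ * σ / (1 - c)) * q m := by
          rw [Finset.sum_const, Finset.card_univ, Fintype.card_fin, nsmul_eq_mul]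
          ring
    have hrhs : Tendsto (fun m => 1 + (k * σ * σ / (1 - c)) * q m) atTop (𝓝 1) := by
      have := (hq.const_mul (k * σ * σ / (1 - c))).const_add 1
      simpa using this
    exact tendsto_of_tendsto_of_tendsto_of_le_of_le' tendsto_const_nhds hrhs
      (Filter.Eventually.of_forall hL1) hub
  · -- subcritical case: λ → σ e^{-a}
    intro hlt
    have hexp : Real.exp a < σ := (Real.lt_log_iff_exp_lt hσ0).mp hlt
    have h1σ : 1 < σ * Real.exp (-a) := by nlinarith [Real.exp_pos (-a), Real.exp_pos a]
    refine ⟨h1σ, ?_⟩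
    have hev1 : ∀ᶠ m in atTop, 1 ≤ σ * (1 - q m) ^ ℓ m :=
      hσP.eventually (eventually_ge_nhds h1σ)
    have hub : ∀ᶠ m in atTop,
        ∑ v, x m v * f m v ≤ σ * (1 - q m) ^ ℓ m + Real.sqrt (k * σ^2 * q m) := by
      filter_upwards [hev1] with m hm
      set L := ∑ v, x m v * f m v with hLdef
      set P := (1 - q m) ^ ℓ m with hPdef
      set D := L - σ * P with hDdef
      have hD0 : 0 ≤ D := by rw [hDdef]; linarith [hLB m]
      have hP0 : (0:ℝ) ≤ P := (pow_pos (hs0 m) _).le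
      have hterm : ∀ i, x m (w m i) * D ≤ q m * σ := by
        intro i
        have hK := hKI m i
        have hσiP : σi i * P ≤ σ * P := mul_le_mul_of_nonneg_right (hσub i) hP0
        have hx := hx0 m (w m i)
        nlinarith
      have hsum : ∑ i, (σi i - 1) * (x m (w m i) * D) ≤ k * ((σ - 1) * (q m * σ)) := by
        calc ∑ i, (σi i - 1) * (x m (w m i) * D)
            ≤ ∑ i : Fin k, (σ - 1) * (q m * σ) := by
              apply Finset.sum_le_sum
              intro i _
              have h1 : σi i - 1 ≤ σ - 1 := by linarith [hσub i]
              have h4 : (0:ℝ) ≤ σi i - 1 := by linarith [hσi i]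
              have h5 : 0 ≤ x m (w m i) * D := mul_nonneg (hx0 m (w m i)) hD0
              have h6 := hterm i
              nlinarith
        _ = k * ((σ - 1) * (q m * σ)) := by
              rw [Finset.sum_const, Finset.card_univ, Fintype.card_fin, nsmul_eq_mul]
      have hDeq : D = (1 - σ * P) + ∑ i, (σi i - 1) * x m (w m i) := by
        rw [hDdef, hLdef, hLe m]; ring
      have hDD : D * D = D * (1 - σ * P) + ∑ i, (σi i - 1) * (x m (w m i) * D) := by
        calc D * D = D * (1 - σ * P) + D * ∑ i, (σi i - 1) * x m (w m i) := by
              nth_rewrite 2 [hDeq]; ring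
        _ = D * (1 - σ * P) + ∑ i, (σi i - 1) * (x m (w m i) * D) := by
              rw [Finset.mul_sum]
              congr 1
              apply Finset.sum_congr rfl
              intro i _
              ring
      have hneg : D * (1 - σ * P) ≤ 0 :=
        mul_nonpos_of_nonneg_of_nonpos hD0 (by linarith)
      have hD2 : D^2 ≤ k * σ^2 * q m := by
        have := hDD
        have hq0' := (hq0 m).le
        nlinarith [hk, hsum]
      have hDle : D ≤ Real.sqrt (k * σ^2 * q m) := by
        calc D = Real.sqrt (D^2) := (Real.sqrt_sq hD0).symm
        _ ≤ Real.sqrt (k * σ^2 * q m) := Real.sqrt_le_sqrt hD2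
      rw [hDdef] at hDle
      linarith
    have hrhs : Tendsto (fun m => σ * (1 - q m) ^ ℓ m + Real.sqrt (k * σ^2 * q m))
        atTop (𝓝 (σ * Real.exp (-a))) := by
      have hsqrt : Tendsto (fun m => Real.sqrt (k * σ^2 * q m)) atTop (𝓝 0) := by
        have := (Real.continuous_sqrt.tendsto (k * σ^2 * 0)).comp (hq.const_mul (k * σ^2))
        simpa [Function.comp_def] using this
      have := hσP.add hsqrt
      simpa using this
    exact tendsto_of_tendsto_of_tendsto_of_le_of_le' hσP hrhs
      (Filter.Eventually.of_forall hLB) hub
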